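/- Let C₋ and C₊ be isotropic elasticity tensors on Sym₃ with Lamé parameters (λ₋, μ₋) and (λ₊, μ₊), each positive definite (μ∓ > 0 and 3λ∓ + 2μ∓ > 0), and let ν₋ = λ₋/(2(λ₋+μ₋)). Let ⟦C⟧ = C₊ − C₋, let n⁽¹⁾, …, n⁽ᵐ⁾ be unit vectors in ℝ³, let β⁽¹⁾, …, β⁽ᵐ⁾ ≥ 0 with Σᵢ β⁽ⁱ⁾ = 1, and let m₋ ∈ [0,1]. If ⟦C⟧ is sign-definite as a quadratic form on Sym₃ (positive definite or negative definite), then the operator ⟦C⟧⁻¹ + m₋ Σᵢ β⁽ⁱ⁾ K₋(n⁽ⁱ⁾) on Sym₃ is invertible, and its inverse M is sign-definite of the same sign as ⟦C⟧: positive definite if ⟦C⟧ is positive definite and negative definite if ⟦C⟧ is negative definite. -/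

import Mathlib

open Matrix

noncomputable section

/-- 3×3 real matrices; symmetric ones model Sym₃. -/
abbrev Mat := Matrix (Fin 3) (Fin 3) ℝ

/-- Inner product on matrices: a:b = tr(ab). -/
def inn (a b : Mat) : ℝ := (a * b).trace

/-- Isotropic elasticity tensor with Lamé parameters l, m: ε ↦ l(tr ε)E + 2mε. -/
def isoC (l m : ℝ) (e : Mat) : Mat := (l * e.trace) • (1 : Mat) + (2*m) • e

/-- The interface operator K(n) for material parameters (μ, ν):
K(n):q = (1/(2μ))(qₙ⊗n + n⊗qₙ − (qₙₙ/(1−ν)) n⊗n). -/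
def Kop (μ ν : ℝ) (n : Fin 3 → ℝ) (q : Mat) : Mat :=
  (1/(2*μ)) • (vecMulVec (q.mulVec n) n + vecMulVec n (q.mulVec n)
    - ((n ⬝ᵥ q.mulVec n)/(1-ν)) • vecMulVec n n)


lemma inn_comm (a b : Mat) : inn a b = inn b a := by rw [inn, inn, Matrix.trace_mul_comm]

lemma inn_add_left (a b c : Mat) : inn (a + b) c = inn a c + inn b c := by
  simp [inn, add_mul, Matrix.trace_add]

lemma inn_sub_left (a b c : Mat) : inn (a - b) c = inn a c - inn b c := by
  simp [inn, sub_mul, Matrix.trace_sub]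

lemma inn_smul_left (r : ℝ) (a b : Mat) : inn (r • a) b = r * inn a b := by
  simp [inn, Matrix.smul_mul, Matrix.trace_smul]

lemma inn_add_right (a b c : Mat) : inn a (b + c) = inn a b + inn a c := by
  rw [inn_comm, inn_add_left, inn_comm a b, inn_comm a c]

lemma inn_sub_right (a b c : Mat) : inn a (b - c) = inn a b - inn a c := by
  rw [inn_comm, inn_sub_left, inn_comm a b, inn_comm a c]

lemma inn_smul_right (r : ℝ) (a b : Mat) : inn a (r • b) = r * inn a b := by
  rw [inn_comm, inn_smul_left, inn_comm a b]

lemma inn_sum_left {m : ℕ} (f : Fin m → Mat) (q : Mat) :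
    inn (∑ i, f i) q = ∑ i, inn (f i) q := by
  simp [inn, Finset.sum_mul, Matrix.trace_sum]

lemma trace_vmv (u v : Fin 3 → ℝ) : (vecMulVec u v).trace = u ⬝ᵥ v := by
  simp [vecMulVec, Matrix.trace, Matrix.diag, dotProduct, Fin.sum_univ_three, mul_comm]

lemma inn_vmv_left (u v : Fin 3 → ℝ) (q : Mat) : inn (vecMulVec u v) q = v ⬝ᵥ q.mulVec u := by
  simp [inn, vecMulVec, Matrix.trace, Matrix.diag, Matrix.mul_apply, Matrix.mulVec,
    dotProduct, Fin.sum_univ_three]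
  ring

lemma inn_vmv_vmv (u v w z : Fin 3 → ℝ) :
    inn (vecMulVec u v) (vecMulVec w z) = (v ⬝ᵥ w) * (z ⬝ᵥ u) := by
  simp [inn, vecMulVec, Matrix.trace, Matrix.diag, Matrix.mul_apply,
    dotProduct, Fin.sum_univ_three]
  ring

lemma inn_one_left (q : Mat) : inn 1 q = q.trace := by simp [inn]

lemma inn_one_right (q : Mat) : inn q 1 = q.trace := by simp [inn]

lemma inn_vmv_one (u v : Fin 3 → ℝ) : inn (vecMulVec u v) 1 = u ⬝ᵥ v := by
  simp [inn, trace_vmv]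

lemma symm_dot (q : Mat) (hq : q.IsSymm) (n : Fin 3 → ℝ) :
    n ⬝ᵥ q.mulVec (q.mulVec n) = q.mulVec n ⬝ᵥ q.mulVec n := by
  have h10 := hq.apply 0 1
  have h20 := hq.apply 0 2
  have h21 := hq.apply 1 2
  simp [Matrix.mulVec, dotProduct, Fin.sum_univ_three]
  rw [h10, h20, h21]
  ring

lemma aux_G (r : Mat) (hr : r.IsSymm) : 0 ≤ inn r r ∧ r.trace ^ 2 ≤ 3 * inn r r := by
  have h10 := hr.apply 0 1
  have h20 := hr.apply 0 2
  have h21 := hr.apply 1 2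
  simp only [inn, Matrix.trace, Matrix.diag, Matrix.mul_apply, Fin.sum_univ_three]
  rw [h10, h20, h21]
  constructor <;> nlinarith [sq_nonneg (r 0 0), sq_nonneg (r 1 1), sq_nonneg (r 2 2),
    sq_nonneg (r 0 1), sq_nonneg (r 0 2), sq_nonneg (r 1 2),
    sq_nonneg (r 0 0 - r 1 1), sq_nonneg (r 0 0 - r 2 2), sq_nonneg (r 1 1 - r 2 2)]

lemma aux_Q2pos (q : Mat) (hq : q.IsSymm) (hne : q ≠ 0) : 0 < inn q q := by
  have h10 := hq.apply 0 1
  have h20 := hq.apply 0 2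
  have h21 := hq.apply 1 2
  obtain ⟨i, j, hij⟩ : ∃ i j, q i j ≠ 0 := by
    by_contra h
    push_neg at h
    exact hne (by ext i j; simp [h])
  simp only [inn, Matrix.trace, Matrix.diag, Matrix.mul_apply, Fin.sum_univ_three]
  rw [h10, h20, h21]
  have : q i j ≠ 0 := hij
  fin_cases i <;> fin_cases j <;>
    simp_all <;>
    nlinarith [mul_self_nonneg (q 0 0), mul_self_nonneg (q 1 1), mul_self_nonneg (q 2 2),
      mul_self_nonneg (q 0 1), mul_self_nonneg (q 0 2), mul_self_nonneg (q 1 2),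
      mul_self_pos.mpr hij]

lemma vmv_transpose (u v : Fin 3 → ℝ) : (vecMulVec u v)ᵀ = vecMulVec v u := by
  ext i j; simp [vecMulVec, mul_comm]

lemma Kop_symm (μ ν : ℝ) (n : Fin 3 → ℝ) (q : Mat) : (Kop μ ν n q).IsSymm := by
  show (Kop μ ν n q)ᵀ = Kop μ ν n q
  simp [Kop, Matrix.transpose_smul, Matrix.transpose_sub, Matrix.transpose_add, vmv_transpose]
  rw [add_comm]

lemma innK_val (μ ν : ℝ) (n : Fin 3 → ℝ) (q : Mat) (hq : q.IsSymm) :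
    inn (Kop μ ν n q) q = (1/(2*μ)) * (2*(q.mulVec n ⬝ᵥ q.mulVec n)
      - ((n ⬝ᵥ q.mulVec n)/(1-ν)) * (n ⬝ᵥ q.mulVec n)) := by
  rw [Kop, inn_smul_left, inn_sub_left, inn_add_left, inn_smul_left,
    inn_vmv_left, inn_vmv_left, inn_vmv_left, symm_dot q hq n]
  ring

lemma inn_vmv_right (q : Mat) (u v : Fin 3 → ℝ) : inn q (vecMulVec u v) = v ⬝ᵥ q.mulVec u := by
  rw [inn_comm, inn_vmv_left]

lemma vmv_mulVec (u v w : Fin 3 → ℝ) : (vecMulVec u v).mulVec w = (v ⬝ᵥ w) • u := by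
  ext i
  simp [vecMulVec, Matrix.mulVec, dotProduct, Fin.sum_univ_three]
  ring

lemma cauchy3 (n a : Fin 3 → ℝ) (hn : n ⬝ᵥ n = 1) : (n ⬝ᵥ a)^2 ≤ a ⬝ᵥ a := by
  have h := hn
  simp only [dotProduct, Fin.sum_univ_three] at h ⊢
  nlinarith [sq_nonneg (n 0 * a 1 - n 1 * a 0), sq_nonneg (n 0 * a 2 - n 2 * a 0),
    sq_nonneg (n 1 * a 2 - n 2 * a 1), sq_nonneg (n 0 * a 0 + n 1 * a 1 + n 2 * a 2)]

lemma keyLB (l μ : ℝ) (hμ : 0 < μ) (hk : 0 < 3*l + 2*μ) (n : Fin 3 → ℝ) (hn : n ⬝ᵥ n = 1)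
    (q : Mat) (hq : q.IsSymm) : 0 ≤ inn (Kop μ (l/(2*(l+μ))) n q) q := by
  have hlμ : 0 < l + μ := by nlinarith
  have hd : 0 < l + 2*μ := by nlinarith
  rw [innK_val _ _ _ _ hq]
  have h1ν : 1 - l/(2*(l+μ)) = (l+2*μ)/(2*(l+μ)) := by field_simp; ring
  rw [h1ν]
  have hcs : (n ⬝ᵥ q.mulVec n)^2 ≤ (q.mulVec n) ⬝ᵥ (q.mulVec n) := cauchy3 n _ hn
  have e : (n ⬝ᵥ q.mulVec n)/((l+2*μ)/(2*(l+μ))) * (n ⬝ᵥ q.mulVec n)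
      = (n ⬝ᵥ q.mulVec n)^2 * (2*(l+μ))/(l+2*μ) := by
    field_simp
  rw [e]
  have h2 : (n ⬝ᵥ q.mulVec n)^2 * (2*(l+μ))/(l+2*μ) ≤ 2 * (n ⬝ᵥ q.mulVec n)^2 := by
    rw [div_le_iff₀ hd]
    nlinarith [sq_nonneg (n ⬝ᵥ q.mulVec n)]
  have h3 : (0:ℝ) ≤ 1/(2*μ) := by positivity
  nlinarith [sq_nonneg (n ⬝ᵥ q.mulVec n)]

lemma scalar_iden (l μ s t A2 Q2 : ℝ) (hμ : μ ≠ 0) (hk : (3*l+2*μ) ≠ 0) (hd : (l+2*μ) ≠ 0) :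
    Q2 - (l/(3*l+2*μ))*t^2 - (2*A2 - (2*(l+μ)/(l+2*μ))*s^2)
    = (Q2 - 2*A2 + 2*s^2 + (2*(l+μ)/(l+2*μ))^2*s^2 + 3*(l*s*(2-(2*(l+μ)/(l+2*μ)))/(2*μ))^2
       + 2*(2*(l+μ)/(l+2*μ))*s^2 - 2*(l*s*(2-(2*(l+μ)/(l+2*μ)))/(2*μ))*t
       - 4*(2*(l+μ)/(l+2*μ))*s^2 + 4*(l*s*(2-(2*(l+μ)/(l+2*μ)))/(2*μ))*s
       - 2*(2*(l+μ)/(l+2*μ))*s*(l*s*(2-(2*(l+μ)/(l+2*μ)))/(2*μ)))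
      - (l/(3*l+2*μ)) * (t - 2*s + (2*(l+μ)/(l+2*μ))*s
          - 3*(l*s*(2-(2*(l+μ)/(l+2*μ)))/(2*μ)))^2 := by
  have hk' : l * 3 + 2 * μ ≠ 0 := by rwa [mul_comm] at hk
  field_simp
  ring

lemma inn_r_val (q : Mat) (a n : Fin 3 → ℝ) (c γ : ℝ)
    (hqn : q.mulVec n = a) (hqa : n ⬝ᵥ q.mulVec a = a ⬝ᵥ a) :
    inn (q - (vecMulVec a n + vecMulVec n a) + (c*(n ⬝ᵥ a)) • vecMulVec n n - γ • 1)
        (q - (vecMulVec a n + vecMulVec n a) + (c*(n ⬝ᵥ a)) • vecMulVec n n - γ • 1)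
    = inn q q - 4*(a ⬝ᵥ a) + 2*(n ⬝ᵥ n)*(a ⬝ᵥ a) + 2*(n ⬝ᵥ a)^2
      + c^2*(n ⬝ᵥ a)^2*(n ⬝ᵥ n)^2 + 3*γ^2 + 2*c*(n ⬝ᵥ a)^2 - 2*γ*q.trace
      - 4*c*(n ⬝ᵥ a)^2*(n ⬝ᵥ n) + 4*γ*(n ⬝ᵥ a) - 2*c*(n ⬝ᵥ a)*γ*(n ⬝ᵥ n) := by
  simp only [inn_sub_left, inn_add_left, inn_smul_left, inn_sub_right, inn_add_right,
    inn_smul_right, inn_vmv_left, inn_vmv_right, inn_vmv_vmv, inn_one_left, inn_one_right,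
    inn_vmv_one, Matrix.trace_sub, Matrix.trace_add, Matrix.trace_smul, Matrix.trace_one,
    trace_vmv, Matrix.sub_mulVec, Matrix.add_mulVec, Matrix.smul_mulVec,
    Matrix.one_mulVec, vmv_mulVec, dotProduct_add, dotProduct_sub, add_dotProduct,
    sub_dotProduct, dotProduct_smul, smul_dotProduct, smul_eq_mul, hqn, hqa]
  simp only [dotProduct, Fin.sum_univ_three, Fintype.card_fin, Nat.cast_ofNat]
  ring

lemma trace_r_val (q : Mat) (a n : Fin 3 → ℝ) (c γ : ℝ) :
    (q - (vecMulVec a n + vecMulVec n a) + (c*(n ⬝ᵥ a)) • vecMulVec n n - γ • 1).trace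
    = q.trace - 2*(n ⬝ᵥ a) + c*(n ⬝ᵥ a)*(n ⬝ᵥ n) - 3*γ := by
  simp only [Matrix.trace_sub, Matrix.trace_add, Matrix.trace_smul, Matrix.trace_one,
    trace_vmv, smul_eq_mul, Fintype.card_fin, Nat.cast_ofNat]
  simp only [dotProduct, Fin.sum_univ_three]
  ring

lemma r_symm (q : Mat) (hq : q.IsSymm) (a n : Fin 3 → ℝ) (c γ : ℝ) :
    (q - (vecMulVec a n + vecMulVec n a) + (c*(n ⬝ᵥ a)) • vecMulVec n n - γ • 1).IsSymm := by
  show _ᵀ = _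
  simp only [Matrix.transpose_sub, Matrix.transpose_add, Matrix.transpose_smul,
    Matrix.transpose_one, vmv_transpose, hq.eq]
  rw [add_comm (vecMulVec n a) (vecMulVec a n)]

lemma inn_r_val1 (q : Mat) (a n : Fin 3 → ℝ) (c γ : ℝ)
    (hqn : q.mulVec n = a) (hqa : n ⬝ᵥ q.mulVec a = a ⬝ᵥ a) (hn : n ⬝ᵥ n = 1) :
    inn (q - (vecMulVec a n + vecMulVec n a) + (c*(n ⬝ᵥ a)) • vecMulVec n n - γ • 1)
        (q - (vecMulVec a n + vecMulVec n a) + (c*(n ⬝ᵥ a)) • vecMulVec n n - γ • 1)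
    = inn q q - 2*(a ⬝ᵥ a) + 2*(n ⬝ᵥ a)^2 + c^2*(n ⬝ᵥ a)^2 + 3*γ^2 + 2*c*(n ⬝ᵥ a)^2
      - 2*γ*q.trace - 4*c*(n ⬝ᵥ a)^2 + 4*γ*(n ⬝ᵥ a) - 2*c*(n ⬝ᵥ a)*γ := by
  rw [inn_r_val q a n c γ hqn hqa, hn]; ring

lemma trace_r_val1 (q : Mat) (a n : Fin 3 → ℝ) (c γ : ℝ) (hn : n ⬝ᵥ n = 1) :
    (q - (vecMulVec a n + vecMulVec n a) + (c*(n ⬝ᵥ a)) • vecMulVec n n - γ • 1).trace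
    = q.trace - 2*(n ⬝ᵥ a) + c*(n ⬝ᵥ a) - 3*γ := by
  rw [trace_r_val q a n c γ, hn]; ring

lemma keyUB (l μ : ℝ) (hμ : 0 < μ) (hk : 0 < 3*l + 2*μ) (n : Fin 3 → ℝ) (hn : n ⬝ᵥ n = 1)
    (q : Mat) (hq : q.IsSymm) :
    inn (Kop μ (l/(2*(l+μ))) n q) q
      ≤ (1/(2*μ)) * (inn q q - (l/(3*l+2*μ)) * q.trace^2) := by
  have hlμ : 0 < l + μ := by nlinarith
  have hd : 0 < l + 2*μ := by nlinarith
  rw [innK_val _ _ _ _ hq]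
  have h1ν : 1 - l/(2*(l+μ)) = (l+2*μ)/(2*(l+μ)) := by field_simp; ring
  rw [h1ν]
  set a : Fin 3 → ℝ := q.mulVec n with ha
  set s : ℝ := n ⬝ᵥ a with hs
  set A2 : ℝ := a ⬝ᵥ a with hA2
  set c : ℝ := 2*(l+μ)/(l+2*μ) with hc
  set γ : ℝ := l*s*(2-c)/(2*μ) with hγ
  have e : s/((l+2*μ)/(2*(l+μ))) * s = c * s^2 := by
    rw [hc]; field_simp
  rw [e]
  have hqa : n ⬝ᵥ q.mulVec a = a ⬝ᵥ a := by rw [ha]; exact symm_dot q hq n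
  have main : 2*A2 - c*s^2 ≤ inn q q - (l/(3*l+2*μ)) * q.trace^2 := by
    have hinr := inn_r_val1 q a n c γ rfl hqa hn
    have htr := trace_r_val1 q a n c γ hn
    have hsym := r_symm q hq a n c γ
    obtain ⟨hr0, hr3⟩ := aux_G _ hsym
    rw [hinr] at hr0
    rw [hinr, htr] at hr3
    rw [← hs, ← hA2] at hr0 hr3
    set t : ℝ := q.trace with ht
    set Q2 : ℝ := inn q q with hQ2
    have h13 : l/(3*l+2*μ) ≤ 1/3 := by
      rw [div_le_div_iff₀ hk (by norm_num : (0:ℝ) < 3)]; nlinarith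
    have hGval : l/(3*l+2*μ) * (t - 2*s + c*s - 3*γ)^2
        ≤ Q2 - 2*A2 + 2*s^2 + c^2*s^2 + 3*γ^2 + 2*c*s^2 - 2*γ*t - 4*c*s^2 + 4*γ*s
          - 2*c*s*γ := by
      nlinarith [mul_nonneg (sub_nonneg.2 h13) (sq_nonneg (t - 2*s + c*s - 3*γ))]
    have hiden := scalar_iden l μ s t A2 Q2 (ne_of_gt hμ) (ne_of_gt hk) (ne_of_gt hd)
    rw [← hc] at hiden
    rw [← hγ] at hiden
    linarith
  have h0 : (0:ℝ) ≤ 1/(2*μ) := by positivity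
  exact mul_le_mul_of_nonneg_left main h0

def Klin (μ ν : ℝ) (n : Fin 3 → ℝ) : Mat →ₗ[ℝ] Mat where
  toFun := Kop μ ν n
  map_add' p q := by
    ext i j
    simp [Kop, Matrix.add_mulVec, dotProduct_add, vecMulVec_apply, Pi.add_apply,
      Matrix.add_apply, Matrix.sub_apply, Matrix.smul_apply, smul_eq_mul]
    ring
  map_smul' r q := by
    ext i j
    simp [Kop, Matrix.smul_mulVec, dotProduct_smul, vecMulVec_apply,
      Pi.smul_apply, Matrix.add_apply, Matrix.sub_apply, Matrix.smul_apply, smul_eq_mul]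
    ring

lemma Klin_apply (μ ν : ℝ) (n : Fin 3 → ℝ) (q : Mat) : Klin μ ν n q = Kop μ ν n q := rfl

/-- The symmetric matrices as a submodule of Mat. -/

def SymS : Submodule ℝ Mat where
  carrier := {A | A.IsSymm}
  add_mem' := by
    intro a b ha hb
    show (a + b)ᵀ = a + b
    rw [Matrix.transpose_add, ha.eq, hb.eq]
  zero_mem' := by
    show (0 : Mat)ᵀ = 0
    simp
  smul_mem' := by
    intro r a ha
    show (r • a)ᵀ = r • a
    rw [Matrix.transpose_smul, ha.eq]

lemma mem_SymS (q : Mat) : q ∈ SymS ↔ q.IsSymm := Iff.rfl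

lemma jump_formula (lm μm lp μp : ℝ) (q : Mat) :
    isoC lp μp q - isoC lm μm q = ((lp - lm) * q.trace) • (1:Mat) + (2*(μp-μm)) • q := by
  simp only [isoC]
  ext i j
  simp [Matrix.add_apply, Matrix.sub_apply, Matrix.smul_apply, smul_eq_mul]
  ring

lemma numpos (dL dM Q2 t : ℝ) (h1 : 0 < dM) (h2 : 0 < 3*dL+2*dM)
    (hQ2 : 0 < Q2) (ht3 : t^2 ≤ 3*Q2) : 0 < (3*dL+2*dM)*Q2 - dL*t^2 := by
  rcases le_or_gt 0 dL with hl | hl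
  · nlinarith [mul_nonneg hl (by linarith : 0 ≤ 3*Q2 - t^2)]
  · nlinarith [mul_nonneg (le_of_lt (neg_pos.2 hl)) (sq_nonneg t)]

lemma numneg (c1 c2 H QH : ℝ) (hc1 : c1 < 0) (hc2 : c2 < 0) (hH : 0 ≤ H)
    (hQH : 0 ≤ QH) (hsum : 0 < H + QH) : H * c1 + QH * c2 < 0 := by
  rcases eq_or_lt_of_le hH with h | h
  · have hQ : 0 < QH := by linarith
    nlinarith
  · nlinarith [mul_nonpos_of_nonneg_of_nonpos hQH (le_of_lt hc2)]

lemma UB0 (lm μm Q2 t : ℝ) (hμm : 0 < μm) (hkm : 0 < 3*lm+2*μm)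
    (h0 : 0 ≤ Q2) (h3 : t^2 ≤ 3*Q2) :
    0 ≤ (1/(2*μm)) * (Q2 - (lm/(3*lm+2*μm)) * t^2) := by
  have h13 : lm/(3*lm+2*μm) ≤ 1/3 := by
    rw [div_le_div_iff₀ hkm (by norm_num : (0:ℝ) < 3)]; nlinarith
  have h2 : (0:ℝ) ≤ 1/(2*μm) := by positivity
  have : lm/(3*lm+2*μm) * t^2 ≤ Q2 := by
    nlinarith [mul_nonneg (sub_nonneg.2 h13) (sq_nonneg t)]
  nlinarith

lemma Dform_iden (dL dM dK A B : ℝ) (hm : dM ≠ 0) (hk : dK ≠ 0) :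
    (1/(2*dM))*A - (dL*B/(2*dM*dK))*B = (dK*A - dL*B^2)/(2*dM*dK) := by
  field_simp

lemma hydro_iden (lm μm lp μp Q2 t : ℝ) (hkm : (3*lm+2*μm) ≠ 0) (hμm : μm ≠ 0)
    (hdM : (μp-μm) ≠ 0) (hdK : (3*(lp-lm)+2*(μp-μm)) ≠ 0) :
    (1/(2*(μp-μm)))*Q2 - ((lp-lm)*t/(2*(μp-μm)*(3*(lp-lm)+2*(μp-μm))))*t
      + (1/(2*μm))*(Q2 - (lm/(3*lm+2*μm))*t^2)
    = (t^2/3)*((3*lp+2*μp)/((3*(lp-lm)+2*(μp-μm))*(3*lm+2*μm)))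
      + (Q2 - t^2/3)*(μp/(2*(μp-μm)*μm)) := by
  have hkm' : lm * 3 + 2 * μm ≠ 0 := by rwa [mul_comm] at hkm
  have hdK' : (lp - lm) * 3 + 2 * (μp - μm) ≠ 0 := by rwa [mul_comm] at hdK
  field_simp
  ring

/-- if the jump ⟦C⟧ of isotropic elasticity tensors is sign-definite on Sym₃,
then the operator ⟦C⟧⁻¹ + m₋ Σᵢ β⁽ⁱ⁾ K₋(n⁽ⁱ⁾) is invertible on Sym₃ and its inverse M is
sign-definite of the same sign as ⟦C⟧. -/
theorem transmitting_tensor_sign_definite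
    (lm μm lp μp : ℝ)
    (hμm : 0 < μm) (hkm : 0 < 3*lm + 2*μm) (hμp : 0 < μp) (hkp : 0 < 3*lp + 2*μp)
    (νm : ℝ) (hνm : νm = lm / (2*(lm + μm)))
    (jump : Mat → Mat) (hjump : ∀ q : Mat, jump q = isoC lp μp q - isoC lm μm q)
    (m : ℕ) (nv : Fin m → Fin 3 → ℝ) (hnv : ∀ i, nv i ⬝ᵥ nv i = 1)
    (β : Fin m → ℝ) (hβ : ∀ i, 0 ≤ β i) (hβsum : ∑ i, β i = 1)
    (mminus : ℝ) (hm : mminus ∈ Set.Icc (0:ℝ) 1)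
    (D : Mat →ₗ[ℝ] Mat)
    (hDsymm : ∀ q : Mat, q.IsSymm → (D q).IsSymm)
    (hD₁ : ∀ q : Mat, q.IsSymm → D (jump q) = q)
    (hD₂ : ∀ q : Mat, q.IsSymm → jump (D q) = q)
    (hsign : (∀ q : Mat, q.IsSymm → q ≠ 0 → 0 < inn (jump q) q) ∨
             (∀ q : Mat, q.IsSymm → q ≠ 0 → inn (jump q) q < 0)) :
    ∃ M : Mat → Mat,
      (∀ q : Mat, q.IsSymm → (M q).IsSymm
        ∧ D (M q) + mminus • ∑ i, β i • Kop μm νm (nv i) (M q) = q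
        ∧ M (D q + mminus • ∑ i, β i • Kop μm νm (nv i) q) = q)
      ∧ ((∀ q : Mat, q.IsSymm → q ≠ 0 → 0 < inn (jump q) q) →
            ∀ q : Mat, q.IsSymm → q ≠ 0 → 0 < inn (M q) q)
      ∧ ((∀ q : Mat, q.IsSymm → q ≠ 0 → inn (jump q) q < 0) →
            ∀ q : Mat, q.IsSymm → q ≠ 0 → inn (M q) q < 0) := by
  subst hνm
  obtain ⟨hm0, hm1⟩ := hm
  -- basic scalars
  set dL : ℝ := lp - lm with hdL
  set dM : ℝ := μp - μm with hdMdef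
  set dK : ℝ := 3*dL + 2*dM with hdKdef
  have hjump' : ∀ q : Mat, jump q = (dL * q.trace) • (1:Mat) + (2*dM) • q := by
    intro q; rw [hjump q, jump_formula]
  have hinn_jump : ∀ q : Mat, inn (jump q) q = dL * q.trace^2 + 2*dM * inn q q := by
    intro q
    rw [hjump' q, inn_add_left, inn_smul_left, inn_smul_left, inn_one_left]
    ring
  have htr1 : (1:Mat).trace = 3 := by
    rw [Matrix.trace_one]; norm_num
  have h1symm : (1:Mat).IsSymm := Matrix.isSymm_one
  have h1ne : (1:Mat) ≠ 0 := one_ne_zero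
  have hinnj1 : inn (jump 1) 1 = 3 * dK := by
    rw [hinn_jump, htr1, inn_one_left, htr1]; rw [hdKdef]; ring
  -- the deviatoric test matrix
  set d : Mat := Matrix.diagonal ![(1:ℝ), -1, 0] with hddef
  have hdsymm : d.IsSymm := Matrix.isSymm_diagonal _
  have hdne : d ≠ 0 := by
    intro h
    have : d 0 0 = 0 := by rw [h]; rfl
    rw [hddef] at this
    simp [Matrix.diagonal] at this
  have hdtr : d.trace = 0 := by
    rw [hddef, Matrix.trace_diagonal]
    simp [Fin.sum_univ_three]
  have hdinn : inn d d = 2 := by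
    rw [inn, hddef, Matrix.diagonal_mul_diagonal, Matrix.trace_diagonal]
    simp [Fin.sum_univ_three]
    norm_num
  have hinnjd : inn (jump d) d = 4 * dM := by
    rw [hinn_jump, hdtr, hdinn]; ring
  -- sign dichotomy for the moduli differences
  have hsgn : (0 < dM ∧ 0 < dK) ∨ (dM < 0 ∧ dK < 0) := by
    rcases hsign with hpos | hneg
    · left
      constructor
      · have := hpos d hdsymm hdne; rw [hinnjd] at this; linarith
      · have := hpos 1 h1symm h1ne; rw [hinnj1] at this; linarith
    · right
      constructor
      · have := hneg d hdsymm hdne; rw [hinnjd] at this; linarith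
      · have := hneg 1 h1symm h1ne; rw [hinnj1] at this; linarith
  have hdM0 : dM ≠ 0 := by rcases hsgn with ⟨h, _⟩ | ⟨h, _⟩ <;> [exact ne_of_gt h; exact ne_of_lt h]
  have hdK0 : dK ≠ 0 := by rcases hsgn with ⟨_, h⟩ | ⟨_, h⟩ <;> [exact ne_of_gt h; exact ne_of_lt h]
  -- the explicit formula for D on symmetric matrices
  have hD_formula : ∀ q : Mat, q.IsSymm →
      D q = (1/(2*dM)) • q - (dL * q.trace/(2*dM*dK)) • (1:Mat) := by
    intro q hq
    set f : Mat := (1/(2*dM)) • q - (dL * q.trace/(2*dM*dK)) • (1:Mat) with hfdef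
    have hfsymm : f.IsSymm := by
      show fᵀ = f
      rw [hfdef]
      rw [Matrix.transpose_sub, Matrix.transpose_smul, Matrix.transpose_smul,
        Matrix.transpose_one, hq.eq]
    have htf : f.trace = q.trace / dK := by
      rw [hfdef, Matrix.trace_sub, Matrix.trace_smul, Matrix.trace_smul, htr1]
      simp only [smul_eq_mul]
      field_simp
      ring
    have hjf : jump f = q := by
      rw [hjump' f, htf, hfdef, smul_sub, smul_smul, smul_smul]
      have e1 : (2*dM) * (1/(2*dM)) = 1 := by field_simp
      have e2 : (2*dM) * (dL*q.trace/(2*dM*dK)) = dL * (q.trace/dK) := by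
        field_simp
      rw [e1, e2, one_smul]
      abel
    have := hD₁ f hfsymm
    rw [hjf] at this
    rw [this, hfdef]
  have hinnD : ∀ q : Mat, q.IsSymm →
      inn (D q) q = (1/(2*dM)) * inn q q - (dL * q.trace/(2*dM*dK)) * q.trace := by
    intro q hq
    rw [hD_formula q hq, inn_sub_left, inn_smul_left, inn_smul_left, inn_one_left]
  -- bounds for the interface operators
  have hKlow : ∀ (q : Mat), q.IsSymm → ∀ i : Fin m,
      0 ≤ inn (Kop μm (lm/(2*(lm+μm))) (nv i) q) q := by
    intro q hq i
    exact keyLB lm μm hμm hkm (nv i) (hnv i) q hq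
  have hKhigh : ∀ (q : Mat), q.IsSymm → ∀ i : Fin m,
      inn (Kop μm (lm/(2*(lm+μm))) (nv i) q) q
        ≤ (1/(2*μm)) * (inn q q - (lm/(3*lm+2*μm)) * q.trace^2) := by
    intro q hq i
    exact keyUB lm μm hμm hkm (nv i) (hnv i) q hq
  have hUB0 : ∀ q : Mat, q.IsSymm →
      0 ≤ (1/(2*μm)) * (inn q q - (lm/(3*lm+2*μm)) * q.trace^2) := by
    intro q hq
    obtain ⟨h0, h3⟩ := aux_G q hq
    exact UB0 lm μm (inn q q) q.trace hμm hkm h0 h3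
  -- the full operator
  set Ksum : Mat →ₗ[ℝ] Mat := mminus • ∑ i, β i • Klin μm (lm/(2*(lm+μm))) (nv i) with hKsumdef
  set Bfull : Mat →ₗ[ℝ] Mat := D + Ksum with hBdef
  have hBapp : ∀ q : Mat,
      Bfull q = D q + mminus • ∑ i, β i • Kop μm (lm/(2*(lm+μm))) (nv i) q := by
    intro q
    rw [hBdef, hKsumdef]
    simp [LinearMap.add_apply, LinearMap.smul_apply, LinearMap.sum_apply, Klin_apply,
      Finset.smul_sum]
  have hKsum_symm : ∀ q : Mat, (Ksum q) ∈ SymS := by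
    intro q
    rw [hKsumdef]
    simp only [LinearMap.smul_apply, LinearMap.sum_apply]
    exact SymS.smul_mem _ (Submodule.sum_mem _ (fun i _ => by
      simp only [LinearMap.smul_apply, Klin_apply]
      exact SymS.smul_mem _ ((mem_SymS _).2 (Kop_symm _ _ _ _))))
  have hBmap : ∀ x ∈ SymS, Bfull x ∈ SymS := by
    intro x hx
    rw [hBdef]
    simp only [LinearMap.add_apply]
    exact SymS.add_mem ((mem_SymS _).2 (hDsymm x ((mem_SymS _).1 hx))) (hKsum_symm x)
  -- value of the quadratic form of Ksum
  have hKsum_val : ∀ q : Mat,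
      inn (Ksum q) q = mminus * ∑ i, β i * inn (Kop μm (lm/(2*(lm+μm))) (nv i) q) q := by
    intro q
    rw [hKsumdef]
    simp only [LinearMap.smul_apply, LinearMap.sum_apply, inn_smul_left]
    congr 1
    rw [inn_sum_left]
    refine Finset.sum_congr rfl (fun i _ => ?_)
    simp only [LinearMap.smul_apply, Klin_apply, inn_smul_left]
  have hKsum_low : ∀ q : Mat, q.IsSymm → 0 ≤ inn (Ksum q) q := by
    intro q hq
    rw [hKsum_val q]
    exact mul_nonneg hm0 (Finset.sum_nonneg (fun i _ =>
      mul_nonneg (hβ i) (hKlow q hq i)))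
  have hKsum_high : ∀ q : Mat, q.IsSymm →
      inn (Ksum q) q ≤ (1/(2*μm)) * (inn q q - (lm/(3*lm+2*μm)) * q.trace^2) := by
    intro q hq
    rw [hKsum_val q]
    have hsum0 : 0 ≤ ∑ i, β i * inn (Kop μm (lm/(2*(lm+μm))) (nv i) q) q :=
      Finset.sum_nonneg (fun i _ => mul_nonneg (hβ i) (hKlow q hq i))
    have h1 : mminus * ∑ i, β i * inn (Kop μm (lm/(2*(lm+μm))) (nv i) q) q
        ≤ ∑ i, β i * inn (Kop μm (lm/(2*(lm+μm))) (nv i) q) q :=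
      mul_le_of_le_one_left hsum0 hm1
    have h2 : ∑ i, β i * inn (Kop μm (lm/(2*(lm+μm))) (nv i) q) q
        ≤ ∑ i, β i * ((1/(2*μm)) * (inn q q - (lm/(3*lm+2*μm)) * q.trace^2)) :=
      Finset.sum_le_sum (fun i _ =>
        mul_le_mul_of_nonneg_left (hKhigh q hq i) (hβ i))
    have h3 : ∑ i, β i * ((1/(2*μm)) * (inn q q - (lm/(3*lm+2*μm)) * q.trace^2))
        = (1/(2*μm)) * (inn q q - (lm/(3*lm+2*μm)) * q.trace^2) := by
      rw [← Finset.sum_mul, hβsum, one_mul]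
    linarith
  -- sign of the quadratic form of Bfull
  have hBpos : 0 < dM → 0 < dK → ∀ q : Mat, q.IsSymm → q ≠ 0 → 0 < inn (Bfull q) q := by
    intro h1 h2 q hq hne
    rw [hBapp q, inn_add_left]
    have hQ2 : 0 < inn q q := aux_Q2pos q hq hne
    obtain ⟨_, ht3⟩ := aux_G q hq
    have hDpos : 0 < inn (D q) q := by
      rw [hinnD q hq]
      rw [Dform_iden dL dM dK (inn q q) q.trace (ne_of_gt h1) (ne_of_gt h2)]
      apply div_pos
      · have h2' : 0 < 3*dL + 2*dM := by rw [← hdKdef]; exact h2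
        have := numpos dL dM (inn q q) q.trace h1 h2' hQ2 ht3
        rw [hdKdef]
        linarith
      · exact mul_pos (by linarith : (0:ℝ) < 2*dM) h2
    have := hKsum_low q hq
    have e : inn (mminus • ∑ i, β i • Kop μm (lm/(2*(lm+μm))) (nv i) q) q
        = inn (Ksum q) q := by
      congr 1
      rw [hKsumdef]
      simp [LinearMap.smul_apply, LinearMap.sum_apply, Klin_apply]
    rw [e]
    linarith
  have hBneg : dM < 0 → dK < 0 → ∀ q : Mat, q.IsSymm → q ≠ 0 → inn (Bfull q) q < 0 := by
    intro h1 h2 q hq hne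
    rw [hBapp q, inn_add_left]
    have hQ2 : 0 < inn q q := aux_Q2pos q hq hne
    obtain ⟨_, ht3⟩ := aux_G q hq
    have e : inn (mminus • ∑ i, β i • Kop μm (lm/(2*(lm+μm))) (nv i) q) q
        = inn (Ksum q) q := by
      congr 1
      rw [hKsumdef]
      simp [LinearMap.smul_apply, LinearMap.sum_apply, Klin_apply]
    rw [e]
    have hKs := hKsum_high q hq
    have hDval := hinnD q hq
    -- split into hydrostatic and deviatoric parts
    set t : ℝ := q.trace with htdef
    set Q2 : ℝ := inn q q with hQ2def
    have hiden : (1/(2*dM)) * Q2 - (dL * t/(2*dM*dK)) * t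
          + (1/(2*μm)) * (Q2 - (lm/(3*lm+2*μm)) * t^2)
        = (t^2/3) * ((3*lp+2*μp)/(dK*(3*lm+2*μm)))
          + (Q2 - t^2/3) * (μp/(2*dM*μm)) := by
      rw [hdKdef, hdL, hdMdef]
      exact hydro_iden lm μm lp μp Q2 t (ne_of_gt hkm) (ne_of_gt hμm)
        (by rw [hdMdef] at hdM0; exact hdM0)
        (by rw [hdKdef, hdL, hdMdef] at hdK0; exact hdK0)
    have hc1 : (3*lp+2*μp)/(dK*(3*lm+2*μm)) < 0 :=
      div_neg_of_pos_of_neg hkp (mul_neg_of_neg_of_pos h2 hkm)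
    have hc2 : μp/(2*dM*μm) < 0 :=
      div_neg_of_pos_of_neg hμp (by nlinarith)
    have hH : 0 ≤ t^2/3 := by positivity
    have hQH : 0 ≤ Q2 - t^2/3 := by linarith
    have hfinal : (t^2/3) * ((3*lp+2*μp)/(dK*(3*lm+2*μm)))
        + (Q2 - t^2/3) * (μp/(2*dM*μm)) < 0 :=
      numneg _ _ _ _ hc1 hc2 hH hQH (by linarith)
    linarith
  -- restrict Bfull to the symmetric subspace and invert
  set Brest : SymS →ₗ[ℝ] SymS := Bfull.restrict hBmap with hBrestdef
  have hBrest_coe : ∀ x : SymS, (Brest x : Mat) = Bfull (x : Mat) := fun x => rfl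
  have hinj : Function.Injective Brest := by
    rw [← LinearMap.ker_eq_bot]
    rw [LinearMap.ker_eq_bot']
    intro x hx0
    by_contra hne
    have hxne : (x : Mat) ≠ 0 := fun h => hne (Subtype.ext h)
    have hxsym : (x : Mat).IsSymm := (mem_SymS _).1 x.2
    have hz : inn (Bfull (x : Mat)) (x : Mat) = 0 := by
      rw [← hBrest_coe x, hx0]
      show inn ((0 : SymS) : Mat) (x : Mat) = 0
      rw [Submodule.coe_zero, inn, Matrix.zero_mul, Matrix.trace_zero]
    rcases hsgn with ⟨ha, hb⟩ | ⟨ha, hb⟩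
    · have := hBpos ha hb (x : Mat) hxsym hxne; linarith
    · have := hBneg ha hb (x : Mat) hxsym hxne; linarith
  have hsurj : Function.Surjective Brest := by
    exact LinearMap.injective_iff_surjective.mp hinj
  set e : SymS ≃ₗ[ℝ] SymS := LinearEquiv.ofBijective Brest ⟨hinj, hsurj⟩ with hedef
  have he_app : ∀ x : SymS, e x = Brest x := fun x => rfl
  refine ⟨fun q => if h : q.IsSymm then ((e.symm ⟨q, h⟩ : SymS) : Mat) else 0, ?_, ?_, ?_⟩
  · intro q hq
    dsimp only
    have hMval : (if h : q.IsSymm then ((e.symm ⟨q, h⟩ : SymS) : Mat) else 0)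
        = ((e.symm ⟨q, hq⟩ : SymS) : Mat) := dif_pos hq
    refine ⟨?_, ?_, ?_⟩
    · rw [hMval]; exact (mem_SymS _).1 (e.symm ⟨q, hq⟩).2
    · rw [hMval, ← hBapp]
      have h1 : Brest (e.symm ⟨q, hq⟩) = ⟨q, hq⟩ := by
        rw [← he_app]; exact e.apply_symm_apply _
      have := congrArg (Subtype.val) h1
      rw [hBrest_coe] at this
      exact this
    · have hy : (D q + mminus • ∑ i, β i • Kop μm (lm/(2*(lm+μm))) (nv i) q) = Bfull q :=
        (hBapp q).symm
      rw [hy]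
      rw [dif_pos ((mem_SymS _).1 (hBmap q ((mem_SymS _).2 hq)))]
      have h2 : (⟨Bfull q, hBmap q ((mem_SymS _).2 hq)⟩ : SymS) = e ⟨q, hq⟩ := by
        apply Subtype.ext
        rw [he_app, hBrest_coe]
      rw [h2, e.symm_apply_apply]
  · intro hpos q hq hne
    dsimp only
    obtain ⟨ha, hb⟩ : 0 < dM ∧ 0 < dK := by
      constructor
      · have := hpos d hdsymm hdne; rw [hinnjd] at this; linarith
      · have := hpos 1 h1symm h1ne; rw [hinnj1] at this; linarith
    rw [dif_pos hq]
    set p : Mat := ((e.symm ⟨q, hq⟩ : SymS) : Mat) with hpdef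
    have hpsym : p.IsSymm := (mem_SymS _).1 (e.symm ⟨q, hq⟩).2
    have hBp : Bfull p = q := by
      have h1 : Brest (e.symm ⟨q, hq⟩) = ⟨q, hq⟩ := by
        rw [← he_app]; exact e.apply_symm_apply _
      have := congrArg (Subtype.val) h1
      rw [hBrest_coe] at this
      exact this
    have hpne : p ≠ 0 := by
      intro h
      rw [h, map_zero] at hBp
      exact hne hBp.symm
    have hfin : 0 < inn (Bfull p) p := hBpos ha hb p hpsym hpne
    rw [hBp] at hfin
    rw [inn_comm]
    exact hfin
  · intro hneg q hq hne
    dsimp only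
    obtain ⟨ha, hb⟩ : dM < 0 ∧ dK < 0 := by
      constructor
      · have := hneg d hdsymm hdne; rw [hinnjd] at this; linarith
      · have := hneg 1 h1symm h1ne; rw [hinnj1] at this; linarith
    rw [dif_pos hq]
    set p : Mat := ((e.symm ⟨q, hq⟩ : SymS) : Mat) with hpdef
    have hpsym : p.IsSymm := (mem_SymS _).1 (e.symm ⟨q, hq⟩).2
    have hBp : Bfull p = q := by
      have h1 : Brest (e.symm ⟨q, hq⟩) = ⟨q, hq⟩ := by
        rw [← he_app]; exact e.apply_symm_apply _
      have := congrArg (Subtype.val) h1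
      rw [hBrest_coe] at this
      exact this
    have hpne : p ≠ 0 := by
      intro h
      rw [h, map_zero] at hBp
      exact hne hBp.symm
    have hfin : inn (Bfull p) p < 0 := hBneg ha hb p hpsym hpne
    rw [hBp] at hfin
    rw [inn_comm]
    exact hfin
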